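/- Let A be a τ-algebra. The uniform structure U^A on Clo(A) coincides with the uniformity of pointwise convergence: for each k ≥ 1, the k-th component of U^A is the filter generated by the sets U_ā = {(f,g) ∈ Clo(A)² : f, g are k-ary and f(ā) = g(ā)} for ā ∈ A^k. -/

import Mathlib

/-! Universal-algebra preamble: functional signatures, algebras (with nonempty
carriers, as usual in universal algebra), terms, homomorphisms, congruences,
quotients, free algebras, and the operators/uniformities of the paper.

Families indexed over the components of a clone are indexed by `k : ℕ`, where
index `k` stands for the component of arity `k + 1` (so all arities `≥ 1`). -/

/-- A functional signature: a type of function symbols together with arities. -/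
structure Signature : Type 1 where
  F : Type
  arity : F → ℕ

/-- A τ-algebra: a nonempty carrier together with an interpretation of each symbol. -/
structure Alg (σ : Signature) : Type 1 where
  carrier : Type
  nonempty : Nonempty carrier
  op : ∀ f : σ.F, (Fin (σ.arity f) → carrier) → carrier

/-- Abstract τ-terms over the variables x_1, …, x_n. -/
inductive Trm (σ : Signature) (n : ℕ) : Type
  | var : Fin n → Trm σ n
  | app : ∀ f : σ.F, (Fin (σ.arity f) → Trm σ n) → Trm σ n

variable {σ : Signature}

/-- Evaluation of a term in an algebra under a valuation of the variables. -/
def Trm.eval {n : ℕ} (A : Alg σ) (v : Fin n → A.carrier) : Trm σ n → A.carrier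
  | .var i => v i
  | .app f ts => A.op f fun i => Trm.eval A v (ts i)

/-- The term operation `t^A` induced on `A` by the term `t`. -/
def termOp {n : ℕ} (A : Alg σ) (t : Trm σ n) : (Fin n → A.carrier) → A.carrier :=
  fun v => t.eval A v

/-- Homomorphisms of τ-algebras. -/
def IsHom (A B : Alg σ) (h : A.carrier → B.carrier) : Prop :=
  ∀ (f : σ.F) (x : Fin (σ.arity f) → A.carrier), h (A.op f x) = B.op f fun i => h (x i)

/-- Isomorphism of τ-algebras. -/
def Isomorphic (A B : Alg σ) : Prop :=
  ∃ h : A.carrier → B.carrier, IsHom A B h ∧ Function.Bijective h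

/-- Membership in the subuniverse generated by `S`. -/
inductive InClosure (A : Alg σ) (S : Set A.carrier) : A.carrier → Prop
  | base : ∀ a ∈ S, InClosure A S a
  | app : ∀ (f : σ.F) (x : Fin (σ.arity f) → A.carrier),
      (∀ i, InClosure A S (x i)) → InClosure A S (A.op f x)

/-- An algebra is finitely generated if a finite subset generates it. -/
def FinGen (A : Alg σ) : Prop :=
  ∃ S : Set A.carrier, S.Finite ∧ ∀ a, InClosure A S a

/-- Product of a family of algebras. -/
def PiAlg {ι : Type} (A : ι → Alg σ) : Alg σ where
  carrier := ∀ i, (A i).carrier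
  nonempty := ⟨fun i => Classical.choice (A i).nonempty⟩
  op f x := fun i => (A i).op f fun j => x j i

/-- A congruence: an equivalence relation compatible with all operations. -/
def IsCongruence (A : Alg σ) (r : A.carrier → A.carrier → Prop) : Prop :=
  Equivalence r ∧ ∀ (f : σ.F) (x y : Fin (σ.arity f) → A.carrier),
    (∀ i, r (x i) (y i)) → r (A.op f x) (A.op f y)

/-- Bundled congruences on an algebra. -/
structure Cong (A : Alg σ) : Type where
  r : A.carrier → A.carrier → Prop
  iscon : IsCongruence A r

/-- The quotient algebra of `A` by (a relation which is intended to be) a congruence. -/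
noncomputable def quotAlg (A : Alg σ) (r : A.carrier → A.carrier → Prop) : Alg σ where
  carrier := Quot r
  nonempty := ⟨Quot.mk r (Classical.choice A.nonempty)⟩
  op f x := Quot.mk r (A.op f fun i => (x i).out)

/-- The subalgebra of `A` on a nonempty subset closed under the operations. -/
def subAlg (A : Alg σ) (S : Set A.carrier) (hne : S.Nonempty)
    (hcl : ∀ (f : σ.F) (x : Fin (σ.arity f) → A.carrier), (∀ i, x i ∈ S) → A.op f x ∈ S) :
    Alg σ where
  carrier := {a : A.carrier // a ∈ S}
  nonempty := ⟨⟨hne.choose, hne.choose_spec⟩⟩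
  op f x := ⟨A.op f fun i => (x i).1, hcl f _ fun i => (x i).2⟩

/-- The subalgebra of `A` generated by a nonempty subset `S`. -/
def genSubAlg (A : Alg σ) (S : Set A.carrier) (hne : S.Nonempty) : Alg σ where
  carrier := {a : A.carrier // InClosure A S a}
  nonempty := ⟨⟨hne.choose, InClosure.base _ hne.choose_spec⟩⟩
  op f x := ⟨A.op f fun i => (x i).1, InClosure.app f _ fun i => (x i).2⟩

/-- H: homomorphic images of members of `K`. -/
def Hcl (K : Set (Alg σ)) : Set (Alg σ) :=
  {B | ∃ A ∈ K, ∃ h : A.carrier → B.carrier, IsHom A B h ∧ Function.Surjective h}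

/-- I: isomorphic copies of members of `K`. -/
def Icl (K : Set (Alg σ)) : Set (Alg σ) := {B | ∃ A ∈ K, Isomorphic A B}

/-- S: isomorphic copies of subalgebras (i.e. algebras embedding into members) of `K`. -/
def Scl (K : Set (Alg σ)) : Set (Alg σ) :=
  {B | ∃ A ∈ K, ∃ e : B.carrier → A.carrier, IsHom B A e ∧ Function.Injective e}

/-- P_f: isomorphic copies of finite (nonempty) products of members of `K`. -/
def Pfcl (K : Set (Alg σ)) : Set (Alg σ) :=
  {B | ∃ (n : ℕ) (A : Fin (n + 1) → Alg σ), (∀ i, A i ∈ K) ∧ Isomorphic (PiAlg A) B}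

/-- S_f: isomorphic copies of finitely generated subalgebras of members of `K`. -/
def Sf (K : Set (Alg σ)) : Set (Alg σ) :=
  {B | FinGen B ∧ ∃ A ∈ K, ∃ e : B.carrier → A.carrier, IsHom B A e ∧ Function.Injective e}

/-- S P_f: isomorphic copies of finitely generated subalgebras of finite products
of members of `K`. -/
def SPf (K : Set (Alg σ)) : Set (Alg σ) :=
  {B | FinGen B ∧ ∃ (n : ℕ) (A : Fin (n + 1) → Alg σ), (∀ i, A i ∈ K) ∧
    ∃ e : B.carrier → (PiAlg A).carrier, IsHom B (PiAlg A) e ∧ Function.Injective e}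

/-- A pseudovariety of finitely generated algebras: a class of finitely generated
algebras closed under homomorphic images and under isomorphic copies of finitely
generated subalgebras of finite products of its members. -/
def IsPseudovarietyFG (C : Set (Alg σ)) : Prop :=
  (∀ A ∈ C, FinGen A) ∧ Hcl C ⊆ C ∧ SPf C ⊆ C

/-- A pseudovariety of finite algebras: a class of finite algebras closed under
finite products, subalgebras and homomorphic images. -/
def IsPseudovarietyFin (C : Set (Alg σ)) : Prop :=
  (∀ A ∈ C, Finite A.carrier) ∧ Hcl C ⊆ C ∧ Scl C ⊆ C ∧ Pfcl C ⊆ C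

/-- A variety: a class closed under arbitrary products, subalgebras and
homomorphic images. -/
def IsVariety (V : Set (Alg σ)) : Prop :=
  (∀ (ι : Type) (A : ι → Alg σ), (∀ i, A i ∈ V) → PiAlg A ∈ V) ∧
  Scl V ⊆ V ∧ Hcl V ⊆ V

/-- The identities of the class `C`: `s` and `t` are identified iff they induce the
same operation on every member of `C`. -/
def FreeCon (C : Set (Alg σ)) (n : ℕ) : Trm σ n → Trm σ n → Prop :=
  fun s t => ∀ A ∈ C, ∀ v : Fin n → A.carrier, s.eval A v = t.eval A v

/-- `freeAlg C k` is `F_{k+1}^C`, the free algebra for `C` on `k + 1` generators: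
the term algebra on the variables `x_1, …, x_{k+1}` modulo the identities of `C`.
(The index `k` stands for arity `k + 1`, so all components have arity `≥ 1`.) -/
noncomputable def freeAlg (C : Set (Alg σ)) (k : ℕ) : Alg σ where
  carrier := Quot (FreeCon C (k + 1))
  nonempty := ⟨Quot.mk _ (Trm.var 0)⟩
  op f x := Quot.mk _ (Trm.app f fun i => (x i).out)

/-- The finitely generated members of `V`. -/
def Vfg (V : Set (Alg σ)) : Set (Alg σ) := {A | A ∈ V ∧ FinGen A}

/-- `B^K`: the congruences of the free algebras whose quotient is isomorphic to a
member of `K`. -/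
def BK (V K : Set (Alg σ)) (k : ℕ) : Set (Cong (freeAlg V k)) :=
  {θ | quotAlg (freeAlg V k) θ.r ∈ Icl K}

/-- `K^B`: isomorphic copies of the quotients of free algebras by congruences in `B`. -/
def KB (V : Set (Alg σ)) (B : ∀ k : ℕ, Set (Cong (freeAlg V k))) : Set (Alg σ) :=
  Icl {A | ∃ (k : ℕ), ∃ θ ∈ B k, A = quotAlg (freeAlg V k) θ.r}

/-- `θ/t̄`: the inverse substitution of the congruence `θ` along the tuple `t̄`;
`s (θ/t̄) s'` iff `s(t₁,…,t_m) θ s'(t₁,…,t_m)`. -/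
noncomputable def conSubstRel {V : Set (Alg σ)} {k : ℕ} (θ : Cong (freeAlg V k)) {m : ℕ}
    (t : Fin (m + 1) → (freeAlg V k).carrier) :
    (freeAlg V m).carrier → (freeAlg V m).carrier → Prop :=
  fun s s' => θ.r (Trm.eval (freeAlg V k) t s.out) (Trm.eval (freeAlg V k) t s'.out)

/-- A family of congruences is closed under inverse substitution. -/
def InvSubstClosed (V : Set (Alg σ)) (B : ∀ k : ℕ, Set (Cong (freeAlg V k))) : Prop :=
  ∀ (k m : ℕ), ∀ θ ∈ B k, ∀ t : Fin (m + 1) → (freeAlg V k).carrier,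
    ∃ θ' ∈ B m, θ'.r = conSubstRel θ t

/-- A family of congruences is closed under finite intersections (componentwise). -/
def InterClosed (V : Set (Alg σ)) (B : ∀ k : ℕ, Set (Cong (freeAlg V k))) : Prop :=
  ∀ (k n : ℕ) (θs : Fin (n + 1) → Cong (freeAlg V k)), (∀ i, θs i ∈ B k) →
    ∃ θ' ∈ B k, θ'.r = fun a b => ∀ i, (θs i).r a b

/-- A family of congruences is upward closed (componentwise). -/
def UpClosed (V : Set (Alg σ)) (B : ∀ k : ℕ, Set (Cong (freeAlg V k))) : Prop :=
  ∀ (k : ℕ), ∀ θ ∈ B k, ∀ ψ : Cong (freeAlg V k), (∀ a b, θ.r a b → ψ.r a b) → ψ ∈ B k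

/-- A filter on `X × X` is a uniformity: every entourage contains the diagonal, the
converse of an entourage is an entourage, and the generalised triangle inequality. -/
def IsUniformity {X : Type} (u : Filter (X × X)) : Prop :=
  (∀ U ∈ u, ∀ x : X, (x, x) ∈ U) ∧
  (∀ U ∈ u, {p : X × X | (p.2, p.1) ∈ U} ∈ u) ∧
  (∀ U ∈ u, ∃ W ∈ u, ∀ x y z : X, (x, y) ∈ W → (y, z) ∈ W → (x, z) ∈ U)

/-- `U^C` (the component of index `k`, i.e. of arity `k + 1`): the filter on
`F_{k+1}^V × F_{k+1}^V` generated by the congruences `θ` of `F_{k+1}^V` such that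
`F_{k+1}^V/θ` is isomorphic to a member of `C`. -/
noncomputable def unifC (V C : Set (Alg σ)) (k : ℕ) :
    Filter ((freeAlg V k).carrier × (freeAlg V k).carrier) :=
  Filter.generate
    {U | ∃ θ : Cong (freeAlg V k), quotAlg (freeAlg V k) θ.r ∈ Icl C ∧ U = {p | θ.r p.1 p.2}}

/-- The `(k+1)`-ary part of `Clo(A)`: the `(k+1)`-ary term operations of `A`. -/
def CloK (A : Alg σ) (k : ℕ) : Type :=
  {g : (Fin (k + 1) → A.carrier) → A.carrier // ∃ t : Trm σ (k + 1), g = termOp A t}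

/-- The uniformity of pointwise convergence on the `(k+1)`-ary part of `Clo(A)`:
generated by the sets `U_ā = {(f, g) | f(ā) = g(ā)}`. -/
noncomputable def ptwUnif (A : Alg σ) (k : ℕ) : Filter (CloK A k × CloK A k) :=
  Filter.generate {U | ∃ a : Fin (k + 1) → A.carrier, U = {p | p.1.1 a = p.2.1 a}}

/-- The natural map from the free algebra for `C` onto `Clo(A)`, sending the class
of a term `t` to the term operation `t^A`. -/
noncomputable def natMap (C : Set (Alg σ)) (A : Alg σ) (k : ℕ) :
    (freeAlg C k).carrier → CloK A k :=
  fun q => ⟨termOp A q.out, q.out, rfl⟩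

/-- The natural map between the free algebras of two classes (class of `t` to
class of `t`). -/
noncomputable def freeNatMap (C D : Set (Alg σ)) (k : ℕ) :
    (freeAlg C k).carrier → (freeAlg D k).carrier :=
  fun q => Quot.mk _ q.out

/-- The natural map `Clo(A) → Clo(B)`, sending `t^A` to `t^B`. -/
noncomputable def cloNatMap (A B : Alg σ) (k : ℕ) : CloK A k → CloK B k :=
  fun g => ⟨termOp B (Classical.choose g.2), Classical.choose g.2, rfl⟩

/-- The variety generated by `A`. -/
def varietyGen (A : Alg σ) : Set (Alg σ) :=
  {B | ∀ V : Set (Alg σ), IsVariety V → A ∈ V → B ∈ V}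

/-- The pseudovariety generated by `A`: the smallest class containing `A` closed
under finite products, subalgebras and homomorphic images. -/
def psvGen (A : Alg σ) : Set (Alg σ) :=
  {B | ∀ C : Set (Alg σ), A ∈ C → Hcl C ⊆ C → Scl C ⊆ C → Pfcl C ⊆ C → B ∈ C}

/-- The pseudovariety of finitely generated algebras generated by `A`: the finitely
generated members of the pseudovariety generated by `A`. -/
def psvFgGen (A : Alg σ) : Set (Alg σ) := {B | FinGen B ∧ B ∈ psvGen A}


/-! ### Auxiliary lemmas for the proof -/

section Aux

theorem isHom_comp {A B C : Alg σ} {g : B.carrier → C.carrier} {h : A.carrier → B.carrier}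
    (hg : IsHom B C g) (hh : IsHom A B h) : IsHom A C (g ∘ h) := by
  intro f x
  simp only [Function.comp, hh f x, hg f]

theorem isHom_id (A : Alg σ) : IsHom A A id := fun f x => rfl

theorem eval_hom {A B : Alg σ} {h : A.carrier → B.carrier} (hh : IsHom A B h) {n : ℕ}
    (v : Fin n → A.carrier) :
    ∀ t : Trm σ n, h (Trm.eval A v t) = Trm.eval B (fun i => h (v i)) t
  | .var i => rfl
  | .app f ts => by
      show h (A.op f fun i => Trm.eval A v (ts i)) = B.op f fun i => Trm.eval B _ (ts i)
      rw [hh f]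
      exact congrArg _ (funext fun i => eval_hom hh v (ts i))

theorem eval_pi {ι : Type} (Af : ι → Alg σ) {n : ℕ} (v : Fin n → (PiAlg Af).carrier) (i : ι) :
    ∀ t : Trm σ n, Trm.eval (PiAlg Af) v t i = Trm.eval (Af i) (fun j => v j i) t
  | .var j => rfl
  | .app f ts => congrArg _ (funext fun j => eval_pi Af v i (ts j))

theorem freeCon_equiv (C : Set (Alg σ)) (n : ℕ) : Equivalence (FreeCon C n) :=
  ⟨fun _ _ _ _ => rfl, fun h B hB v => (h B hB v).symm,
    fun h1 h2 B hB v => (h1 B hB v).trans (h2 B hB v)⟩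

theorem out_rel {X : Type} {r : X → X → Prop} (hr : Equivalence r) (x : X) :
    r (Quot.mk r x).out x :=
  (hr.eqvGen_iff).mp (Quot.eqvGen_exact (Quot.out_eq (Quot.mk r x)))

theorem self_mem_varietyGen (A : Alg σ) : A ∈ varietyGen A := fun _ _ hA => hA

theorem evalF_mk {C : Set (Alg σ)} {A : Alg σ} (hA : A ∈ C) {n : ℕ} (v : Fin n → A.carrier)
    (t : Trm σ n) : Trm.eval A v (Quot.mk (FreeCon C n) t).out = Trm.eval A v t :=
  out_rel (freeCon_equiv C n) t A hA v

theorem free_op_mk (C : Set (Alg σ)) (k : ℕ) (f : σ.F) (ts : Fin (σ.arity f) → Trm σ (k + 1)) :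
    (freeAlg C k).op f (fun i => Quot.mk _ (ts i)) = Quot.mk _ (Trm.app f ts) := by
  apply Quot.sound
  intro B hB v
  show B.op f _ = B.op f _
  exact congrArg _ (funext fun i => out_rel (freeCon_equiv C (k + 1)) (ts i) B hB v)

theorem eval_free_var (C : Set (Alg σ)) (k : ℕ) :
    ∀ t : Trm σ (k + 1),
      Trm.eval (freeAlg C k) (fun i => Quot.mk _ (Trm.var i)) t = Quot.mk _ t
  | .var i => rfl
  | .app f ts => by
      show (freeAlg C k).op f (fun i => Trm.eval (freeAlg C k) _ (ts i)) = _
      have h : (fun i => Trm.eval (freeAlg C k) (fun i => Quot.mk _ (Trm.var i)) (ts i)) =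
          fun i => Quot.mk (FreeCon C (k + 1)) (ts i) :=
        funext fun i => eval_free_var C k (ts i)
      rw [h]
      exact free_op_mk C k f ts

theorem quot_mk_isHom {B : Alg σ} (θ : Cong B) : IsHom B (quotAlg B θ.r) (Quot.mk θ.r) := by
  intro f x
  show Quot.mk θ.r (B.op f x) = Quot.mk θ.r (B.op f fun i => (Quot.mk θ.r (x i)).out)
  exact Quot.sound (θ.iscon.2 f _ _ fun i => (θ.iscon.1.symm (out_rel θ.iscon.1 (x i))))

theorem quot_free_finGen {C : Set (Alg σ)} {k : ℕ} (θ : Cong (freeAlg C k)) :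
    FinGen (quotAlg (freeAlg C k) θ.r) := by
  refine ⟨Set.range (fun i : Fin (k + 1) =>
      Quot.mk θ.r (Quot.mk (FreeCon C (k + 1)) (Trm.var i))), Set.finite_range _, ?_⟩
  intro q
  induction q using Quot.ind with | _ p => ?_
  induction p using Quot.ind with | _ t => ?_
  induction t with
  | var i => exact .base _ ⟨i, rfl⟩
  | app f ts ih =>
      rw [← free_op_mk C k f ts]; erw [quot_mk_isHom θ f]
      exact .app f _ ih

theorem sub_mem_psvGen {A B : Alg σ} (e : B.carrier → A.carrier) (he : IsHom B A e)
    (hinj : Function.Injective e) : B ∈ psvGen A :=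
  fun C hA _ hS _ => hS ⟨A, hA, e, he, hinj⟩

/-- The congruence on the free algebra given by evaluation at a tuple of `A`. -/
noncomputable def evalCong (A : Alg σ) (k : ℕ) (a : Fin (k + 1) → A.carrier) :
    Cong (freeAlg (varietyGen A) k) where
  r p q := Trm.eval A a p.out = Trm.eval A a q.out
  iscon := by
    refine ⟨⟨fun _ => rfl, Eq.symm, Eq.trans⟩, ?_⟩
    intro f x y h
    show Trm.eval A a ((freeAlg (varietyGen A) k).op f x).out = _
    show Trm.eval A a (Quot.mk _ (Trm.app f fun i => (x i).out)).out =
      Trm.eval A a (Quot.mk _ (Trm.app f fun i => (y i).out)).out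
    rw [evalF_mk (self_mem_varietyGen A) a, evalF_mk (self_mem_varietyGen A) a]
    show A.op f (fun i => Trm.eval A a (x i).out) = A.op f (fun i => Trm.eval A a (y i).out)
    exact congrArg _ (funext h)

/-- Algebras that are homomorphic images of subalgebras of finite powers of `A`. -/
def C0 (A : Alg σ) : Set (Alg σ) :=
  {B | ∃ (ι : Type) (S' : Alg σ) (e : S'.carrier → (ι → A.carrier))
      (φ : S'.carrier → B.carrier),
    Finite ι ∧ IsHom S' (PiAlg fun _ : ι => A) e ∧ Function.Injective e ∧
    IsHom S' B φ ∧ Function.Surjective φ}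

theorem self_mem_C0 (A : Alg σ) : A ∈ C0 A := by
  refine ⟨Unit, A, fun a _ => a, id, inferInstance, ?_, ?_, isHom_id A, Function.surjective_id⟩
  · intro f x; rfl
  · intro a b h; exact congrFun h ()

theorem hcl_C0 (A : Alg σ) : Hcl (C0 A) ⊆ C0 A := by
  rintro B ⟨D, ⟨ι, S', e, φ, hfin, he, hei, hφ, hφs⟩, ψ, hψ, hψs⟩
  exact ⟨ι, S', e, ψ ∘ φ, hfin, he, hei, isHom_comp hψ hφ, hψs.comp hφs⟩

theorem scl_C0 (A : Alg σ) : Scl (C0 A) ⊆ C0 A := by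
  rintro B ⟨D, ⟨ι, S', e, φ, hfin, he, hei, hφ, hφs⟩, eB, heB, heBi⟩
  classical
  set T : Set S'.carrier := {s | ∃ b, φ s = eB b} with hT
  have hne : T.Nonempty := by
    obtain ⟨b⟩ := B.nonempty
    obtain ⟨s, hs⟩ := hφs (eB b)
    exact ⟨s, b, hs⟩
  have hcl : ∀ (f : σ.F) (x : Fin (σ.arity f) → S'.carrier), (∀ i, x i ∈ T) →
      S'.op f x ∈ T := by
    intro f x hx
    refine ⟨B.op f fun i => (hx i).choose, ?_⟩
    rw [hφ f, heB f]
    exact congrArg _ (funext fun i => (hx i).choose_spec)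
  refine ⟨ι, subAlg S' T hne hcl, fun s => e s.1, fun s => s.2.choose, hfin, ?_, ?_, ?_, ?_⟩
  · intro f x; exact he f _
  · intro a b h; exact Subtype.ext (hei h)
  · intro f x
    apply heBi
    have h1 : φ ((subAlg S' T hne hcl).op f x).1 = eB (((subAlg S' T hne hcl).op f x).2.choose) :=
      ((subAlg S' T hne hcl).op f x).2.choose_spec
    rw [← h1]
    show φ (S'.op f fun i => (x i).1) = _
    rw [hφ f, heB f]
    exact congrArg _ (funext fun i => (x i).2.choose_spec)
  · intro b
    obtain ⟨s, hs⟩ := hφs (eB b)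
    have hsT : s ∈ T := ⟨b, hs⟩
    refine ⟨⟨s, hsT⟩, heBi ?_⟩
    rw [← hsT.choose_spec]
    exact hs

theorem pfcl_C0 (A : Alg σ) : Pfcl (C0 A) ⊆ C0 A := by
  rintro B ⟨n, D, hD, ψ, hψ, hψb⟩
  classical
  choose ι S' e φ hfin he hei hφ hφs using fun i => hD i
  haveI : ∀ i, Finite (ι i) := hfin
  refine ⟨Σ i, ι i, PiAlg S', fun s p => e p.1 (s p.1) p.2,
    ψ ∘ fun s i => φ i (s i), inferInstance, ?_, ?_, ?_, ?_⟩
  · intro f x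
    funext p
    obtain ⟨i0, j⟩ := p
    exact congrFun (he i0 f (fun l => x l i0)) j
  · intro s s' h
    funext i0
    apply hei i0
    funext j
    exact congrFun h ⟨i0, j⟩
  · refine isHom_comp hψ ?_
    intro f x
    funext i0
    exact hφ i0 f (fun l => x l i0)
  · refine hψb.surjective.comp ?_
    intro d
    exact ⟨fun i => (hφs i (d i)).choose, funext fun i => (hφs i (d i)).choose_spec⟩

theorem psvGen_subset_C0 (A : Alg σ) : psvGen A ⊆ C0 A :=
  fun _ hB => hB (C0 A) (self_mem_C0 A) (hcl_C0 A) (scl_C0 A) (pfcl_C0 A)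

end Aux

/-- Proposition 7 of the paper. For a τ-algebra `A`, the
uniformity `U^A` on `Clo(A)` (identified with `F^V` for `V` the variety generated
by `A`) coincides with the uniformity of pointwise convergence: its component of
each arity is the filter generated by the sets
`U_ā = {(f, g) | f, g k-ary, f(ā) = g(ā)}`. -/
theorem UA_eq_pointwise {σ : Signature} (A : Alg σ) (k : ℕ) :
    unifC (varietyGen A) (psvFgGen A) k =
      Filter.generate {U | ∃ a : Fin (k + 1) → A.carrier,
        U = {p : (freeAlg (varietyGen A) k).carrier × (freeAlg (varietyGen A) k).carrier |
              Trm.eval A a p.1.out = Trm.eval A a p.2.out}} := by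
  set V := varietyGen A with hV
  apply le_antisymm
  · -- U^A refines pointwise: every pointwise generator is a congruence generator
    rw [Filter.le_generate_iff]
    rintro U ⟨a, rfl⟩
    apply Filter.mem_generate_of_mem
    refine ⟨evalCong A k a, ?_, rfl⟩
    -- the quotient by evalCong embeds in A, is finitely generated
    set θ := evalCong A k a with hθ
    refine ⟨quotAlg (freeAlg V k) θ.r, ⟨quot_free_finGen θ, ?_⟩, id, isHom_id _,
      Function.bijective_id⟩
    set h : (quotAlg (freeAlg V k) θ.r).carrier → A.carrier :=
      Quot.lift (fun p => Trm.eval A a p.out) (fun _ _ hpq => hpq) with hh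
    have hout : ∀ q : (quotAlg (freeAlg V k) θ.r).carrier,
        h q = Trm.eval A a q.out.out := by
      intro q
      conv_lhs => rw [← Quot.out_eq q]
    refine sub_mem_psvGen h ?_ ?_
    · intro f x
      show Trm.eval A a (Quot.mk (FreeCon V (k + 1))
        (Trm.app f fun i => ((fun i => (x i).out) i).out)).out = _
      rw [evalF_mk (self_mem_varietyGen A) a]
      show A.op f (fun i => Trm.eval A a (x i).out.out) = _
      exact congrArg _ (funext fun i => (hout (x i)).symm)
    · intro p q hpq
      induction p using Quot.ind with | _ p => ?_
      induction q using Quot.ind with | _ q => ?_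
      exact Quot.sound hpq
  · -- pointwise refines U^A : every congruence generator contains a finite
    -- intersection of pointwise generators
    rw [unifC, Filter.le_generate_iff]
    rintro U ⟨θ, ⟨B, ⟨hBfg, hBpsv⟩, ψ, hψ, hψb⟩, rfl⟩
    -- the quotient lies in the pseudovariety, hence in C0
    have hquot : quotAlg (freeAlg V k) θ.r ∈ C0 A := by
      apply psvGen_subset_C0
      intro C hA hH hS hP
      exact hH ⟨B, hBpsv C hA hH hS hP, ψ, hψ, hψb.surjective⟩
    obtain ⟨ι, S', e, φ, hfin, he, hei, hφ, hφs⟩ := hquot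
    haveI : Finite ι := hfin
    classical
    -- choose preimages of the generators
    set q : Fin (k + 1) → (quotAlg (freeAlg V k) θ.r).carrier :=
      fun i => Quot.mk θ.r (Quot.mk (FreeCon V (k + 1)) (Trm.var i)) with hq
    have hs : ∀ i, ∃ s, φ s = q i := fun i => hφs (q i)
    set s : Fin (k + 1) → S'.carrier := fun i => (hs i).choose with hsdef
    have hsspec : ∀ i, φ (s i) = q i := fun i => (hs i).choose_spec
    -- key computations
    have key1 : ∀ t : Trm σ (k + 1),
        φ (Trm.eval S' s t) = Quot.mk θ.r (Quot.mk (FreeCon V (k + 1)) t) := by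
      intro t
      rw [eval_hom hφ s t]
      have h2 : (fun i => φ (s i)) = fun i =>
          Quot.mk θ.r (Quot.mk (FreeCon V (k + 1)) (Trm.var i)) := funext hsspec
      rw [h2]
      have h3 := eval_hom (quot_mk_isHom θ) (fun i => Quot.mk (FreeCon V (k + 1)) (Trm.var i)) t
      rw [← h3, eval_free_var V k t]
    have key2 : ∀ (t : Trm σ (k + 1)) (j : ι),
        e (Trm.eval S' s t) j = Trm.eval A (fun i => e (s i) j) t := by
      intro t j
      rw [eval_hom he s t]
      exact eval_pi (fun _ : ι => A) (fun i => e (s i)) j t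
    -- assemble the finite intersection
    show _ ∈ Filter.generate _
    rw [Filter.mem_generate_iff]
    refine ⟨(fun j : ι =>
      {p : (freeAlg V k).carrier × (freeAlg V k).carrier |
        Trm.eval A (fun i => e (s i) j) p.1.out =
        Trm.eval A (fun i => e (s i) j) p.2.out}) '' Set.univ, ?_, Set.finite_univ.image _, ?_⟩
    · rintro W ⟨j, -, rfl⟩
      exact ⟨fun i => e (s i) j, rfl⟩
    · intro p hp
      have hj : ∀ j : ι, Trm.eval A (fun i => e (s i) j) p.1.out =
          Trm.eval A (fun i => e (s i) j) p.2.out := by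
        intro j
        exact hp _ ⟨j, Set.mem_univ j, rfl⟩
      have h1 : e (Trm.eval S' s p.1.out) = e (Trm.eval S' s p.2.out) := by
        funext j
        rw [key2 p.1.out j, key2 p.2.out j]
        exact hj j
      have h2 := hei h1
      have h3 : Quot.mk θ.r p.1 = Quot.mk θ.r p.2 := by
        have h4 := congrArg φ h2
        rw [key1 p.1.out, key1 p.2.out] at h4; erw [Quot.out_eq, Quot.out_eq] at h4
        exact h4
      exact (θ.iscon.1.eqvGen_iff).mp (Quot.eqvGen_exact h3)
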